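/- For all real t with 0 ≤ t ≤ 1 and all x > 1, one has (x+1)/(x-1) ≥ (1-t)^2·(x+x^t)/(x-x^t) + t^2·(x^t+1)/(x^t-1). -/

import Mathlib

lemma ineq_key (s x : ℝ) (hs0 : 0 < s) (hs1 : s ≤ 1) (hx : 1 < x) :
    s * ((x ^ s + 1) / (x ^ s - 1)) ≤ (x + 1) / (x - 1) := by
  have hx0 : (0:ℝ) < x := by linarith
  have hy : 1 < x ^ s := (Real.one_lt_rpow_iff_of_pos hx0).mpr (Or.inl ⟨hx, hs0⟩)
  rw [mul_div_assoc', div_le_div_iff₀ (by linarith) (by linarith)]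
  -- reduce to F x ≥ 0
  set F : ℝ → ℝ := fun z => (1-s)*z^(s+1) + (1+s)*z^s - (1+s)*z - (1-s) with hF
  have hderiv : ∀ z ∈ Set.Ici (1:ℝ), HasDerivAt F ((1+s)*((1-s)*z^s + s*z^(s-1) - 1)) z := by
    intro z hz
    have hz0 : z ≠ 0 := by have : (1:ℝ) ≤ z := hz; intro h; rw [h] at this; linarith
    have h1 : HasDerivAt (fun z : ℝ => z ^ (s+1)) ((s+1) * z ^ (s+1-1)) z :=
      Real.hasDerivAt_rpow_const (Or.inl hz0)
    have h2 : HasDerivAt (fun z : ℝ => z ^ s) (s * z ^ (s-1)) z :=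
      Real.hasDerivAt_rpow_const (Or.inl hz0)
    have h3 : s + 1 - 1 = s := by ring
    rw [h3] at h1
    have h4 := (((h1.const_mul (1-s)).add (h2.const_mul (1+s))).sub
      ((hasDerivAt_id z).const_mul (1+s))).sub_const (1-s)
    exact h4.congr_deriv (by ring)
  have hG : ∀ z ∈ Set.Ici (1:ℝ), 0 ≤ (1+s)*((1-s)*z^s + s*z^(s-1) - 1) := by
    intro z hz
    have hz1 : (1:ℝ) ≤ z := hz
    have hz0 : (0:ℝ) < z := by linarith
    have amgm := Real.geom_mean_le_arith_mean2_weighted (by linarith : (0:ℝ) ≤ 1-s)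
      hs0.le (by positivity : (0:ℝ) ≤ z^s) (by positivity : (0:ℝ) ≤ z^(s-1)) (by ring)
    have h1 : (z^s)^(1-s) * (z^(s-1))^s = 1 := by
      rw [← Real.rpow_mul hz0.le, ← Real.rpow_mul hz0.le, ← Real.rpow_add hz0,
        show s*(1-s)+(s-1)*s = 0 by ring, Real.rpow_zero]
    rw [h1] at amgm
    have h3 : (0:ℝ) ≤ 1 + s := by linarith
    nlinarith [amgm]
  have hmono : MonotoneOn F (Set.Ici 1) := by
    apply monotoneOn_of_deriv_nonneg (convex_Ici 1)
    · exact fun z hz => ((hderiv z hz).continuousAt).continuousWithinAt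
    · intro z hz
      rw [interior_Ici] at hz
      exact ((hderiv z (Set.Ioi_subset_Ici_self hz)).differentiableAt).differentiableWithinAt
    · intro z hz
      rw [interior_Ici] at hz
      rw [(hderiv z (Set.Ioi_subset_Ici_self hz)).deriv]
      exact hG z (Set.Ioi_subset_Ici_self hz)
  have hF1 : F 1 = 0 := by
    simp only [hF, Real.one_rpow]
    ring
  have hFx : 0 ≤ F x := by
    have := hmono (Set.self_mem_Ici) (by exact hx.le : x ∈ Set.Ici 1) hx.le
    linarith [hF1 ▸ this]
  have hxs1 : x ^ (s+1) = x^s * x := Real.rpow_add_one (ne_of_gt hx0) s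
  simp only [hF, hxs1] at hFx
  nlinarith [hFx]

theorem ineq_lemma_I (t x : ℝ) (ht0 : 0 ≤ t) (ht1 : t ≤ 1) (hx : 1 < x) :
    (1 - t) ^ 2 * ((x + x ^ t) / (x - x ^ t)) + t ^ 2 * ((x ^ t + 1) / (x ^ t - 1)) ≤
      (x + 1) / (x - 1) := by
  rcases eq_or_lt_of_le ht0 with h0 | ht0'
  · subst h0
    simp [Real.rpow_zero]
  rcases eq_or_lt_of_le ht1 with h1 | ht1'
  · subst h1
    norm_num [Real.rpow_one]
  have hx0 : (0:ℝ) < x := by linarith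
  have hxt : (0:ℝ) < x^t := Real.rpow_pos_of_pos hx0 t
  have hB := ineq_key t x ht0' ht1 hx
  have hA := ineq_key (1-t) x (by linarith) (by linarith) hx
  have hmul : x^(1-t) * x^t = x := by
    rw [← Real.rpow_add hx0]
    norm_num
  have hlt : x^t < x := by
    calc x^t < x^(1:ℝ) := Real.rpow_lt_rpow_of_exponent_lt hx ht1'
    _ = x := Real.rpow_one x
  have h1t : 1 < x^(1-t) := (Real.one_lt_rpow_iff_of_pos hx0).mpr (Or.inl ⟨hx, by linarith⟩)
  have hEq : (x + x^t)/(x - x^t) = (x^(1-t)+1)/(x^(1-t)-1) := by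
    rw [div_eq_div_iff (by linarith) (by linarith)]
    linear_combination 2 * hmul
  rw [hEq]
  nlinarith [mul_le_mul_of_nonneg_left hA (by linarith : (0:ℝ) ≤ 1-t),
    mul_le_mul_of_nonneg_left hB ht0]
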